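/- Let f : {0,1}^n → {0,1} be non-constant and computable by a decision tree of depth at most d, d ≥ 1, and let s = psize(f). Define the decision tree T_f recursively: if f is constant, T_f is a leaf labeled with that constant; otherwise, the root of T_f is labeled x_i for the minimum index i minimizing psize(f_{|x_i←0}), its left subtree is T_{f_{|x_i←0}} and its right subtree is T_{f_{|x_i←1}}. Then the zero-depth of T_f — the maximum, over all root-to-leaf paths, of the number of left (x_i = 0) edges taken — is at most d·ln(s) + 1. -/

import Mathlib

/-- Binary decision trees over `n` Boolean variables. -/
inductive DTree (n : ℕ) : Type where
  | leaf : Bool → DTree n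
  | node : Fin n → DTree n → DTree n → DTree n

namespace DTree

/-- Evaluation of a decision tree on an input `x`: at a node labeled `i`,
go right if `x i = true` and left otherwise. -/
def eval {n : ℕ} : DTree n → (Fin n → Bool) → Bool
  | leaf b, _ => b
  | node i t0 t1, x => if x i then eval t1 x else eval t0 x

/-- Depth of a decision tree: maximum number of edges on a root-to-leaf path. -/
def depth {n : ℕ} : DTree n → ℕ
  | leaf _ => 0
  | node _ t0 t1 => 1 + max (depth t0) (depth t1)

end DTree

/-- The set of monomials of the (unique) multilinear `F₂`-polynomial
representation of `f`, via Möbius inversion over `F₂`: the monomial `M`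
occurs iff `∑_{x ≤ 1_M} f(x)` is odd. -/
def monomialsOf {n : ℕ} (f : (Fin n → Bool) → Bool) : Finset (Finset (Fin n)) :=
  Finset.univ.filter (fun M : Finset (Fin n) =>
    (Finset.univ.filter (fun x : Fin n → Bool =>
      (∀ i, x i = true → i ∈ M) ∧ f x = true)).card % 2 = 1)

/-- `psize f` is the number of non-constant monomials of the multilinear
`F₂`-polynomial representation of `f`. -/
def psize {n : ℕ} (f : (Fin n → Bool) → Bool) : ℕ :=
  ((monomialsOf f).filter (fun M => M.Nonempty)).card

/-- Substituting the value `b` for the variable `x_i` in `f`. -/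
def restrict {n : ℕ} (f : (Fin n → Bool) → Bool) (i : Fin n) (b : Bool) :
    (Fin n → Bool) → Bool :=
  fun x => f (Function.update x i b)

/-- `PsizeTree f T` holds when `T` is the tree `T_f` built recursively from
`f`: a leaf labeled with the constant value if `f` is constant, and otherwise
a root labeled with the minimum index `i` minimizing `psize (f|_{x_i ← 0})`,
with left subtree `T_{f|_{x_i ← 0}}` and right subtree `T_{f|_{x_i ← 1}}`. -/
inductive PsizeTree {n : ℕ} : ((Fin n → Bool) → Bool) → DTree n → Prop where
  | leaf (f : (Fin n → Bool) → Bool) (b : Bool) (hconst : ∀ x, f x = b) :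
      PsizeTree f (DTree.leaf b)
  | node (f : (Fin n → Bool) → Bool)
      (hnc : ¬ ∃ b : Bool, ∀ x, f x = b) (i : Fin n)
      (hmin : ∀ j : Fin n, psize (restrict f i false) ≤ psize (restrict f j false))
      (hleast : ∀ j : Fin n, j < i →
        psize (restrict f i false) < psize (restrict f j false))
      (t0 t1 : DTree n)
      (h0 : PsizeTree (restrict f i false) t0)
      (h1 : PsizeTree (restrict f i true) t1) :
      PsizeTree f (DTree.node i t0 t1)

namespace DTree

/-- The zero-depth of a decision tree: the maximum, over all root-to-leaf
paths, of the number of left (`x_i = 0`) edges taken. -/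
def zeroDepth {n : ℕ} : DTree n → ℕ
  | leaf _ => 0
  | node _ t0 t1 => max (zeroDepth t0 + 1) (zeroDepth t1)

end DTree


section Stmt18Aux

variable {n : ℕ}

private def cnt (f : (Fin n → Bool) → Bool) (M : Finset (Fin n)) : ℕ :=
  (Finset.univ.filter (fun x : Fin n → Bool =>
      (∀ i, x i = true → i ∈ M) ∧ f x = true)).card

private lemma mem_monomialsOf {f : (Fin n → Bool) → Bool} {M : Finset (Fin n)} :
    M ∈ monomialsOf f ↔ cnt f M % 2 = 1 := by
  simp [monomialsOf, cnt]

private lemma even_card_of_flip (i : Fin n) (s : Finset (Fin n → Bool))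
    (hs : ∀ x ∈ s, Function.update x i (!(x i)) ∈ s) : s.card % 2 = 0 := by
  classical
  have hsplit := Finset.card_filter_add_card_filter_not (s := s)
      (fun x => x i = true)
  have hcard : (s.filter (fun x => x i = true)).card
      = (s.filter (fun x => ¬ x i = true)).card := by
    apply Finset.card_nbij' (fun x => Function.update x i false)
      (fun x => Function.update x i true)
    · intro x hx
      simp only [Finset.mem_coe, Finset.mem_filter] at hx ⊢
      have := hs x hx.1
      rw [hx.2] at this
      exact ⟨this, by simp⟩
    · intro x hx
      simp only [Finset.mem_coe, Finset.mem_filter] at hx ⊢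
      have := hs x hx.1
      have hxi : x i = false := by
        cases h : x i
        · rfl
        · exact absurd h hx.2
      rw [hxi] at this
      exact ⟨this, by simp⟩
    · intro x hx
      simp only [Finset.mem_coe, Finset.mem_filter] at hx
      dsimp only; rw [Function.update_idem, ← hx.2, Function.update_eq_self]
    · intro x hx
      simp only [Finset.mem_coe, Finset.mem_filter] at hx
      have hxi : x i = false := by
        cases h : x i
        · rfl
        · exact absurd h hx.2
      dsimp only; rw [Function.update_idem, ← hxi, Function.update_eq_self]
  rw [← hsplit, hcard, ← two_mul, Nat.mul_mod_right]

private lemma cnt_even_of_indep {g : (Fin n → Bool) → Bool} {i : Fin n}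
    (hg : ∀ x c, g (Function.update x i c) = g x) {M : Finset (Fin n)} (hiM : i ∈ M) :
    cnt g M % 2 = 0 := by
  unfold cnt
  apply even_card_of_flip i
  intro x hx
  simp only [Finset.mem_filter, Finset.mem_univ, true_and] at hx ⊢
  constructor
  · intro j hj
    rcases eq_or_ne j i with rfl | hne
    · exact hiM
    · exact hx.1 j (by rwa [Function.update_of_ne hne] at hj)
  · rw [hg, hx.2]

private lemma restrict_indep (f : (Fin n → Bool) → Bool) (i : Fin n) (b : Bool) :
    ∀ x c, restrict f i b (Function.update x i c) = restrict f i b x := by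
  intro x c
  simp [restrict, Function.update_idem]

private lemma update_self_of_eq {x : Fin n → Bool} {i : Fin n} {c : Bool} (h : x i = c) :
    Function.update x i c = x := by
  rw [← h]
  exact Function.update_eq_self i x

private lemma eval_node (j : Fin n) (t0 t1 : DTree n) (x : Fin n → Bool) :
    (DTree.node j t0 t1).eval x = if x j = true then t1.eval x else t0.eval x := rfl

private lemma depth_node (j : Fin n) (t0 t1 : DTree n) :
    (DTree.node j t0 t1).depth = 1 + max t0.depth t1.depth := rfl

private lemma monomialsOf_restrict_false (f : (Fin n → Bool) → Bool) (i : Fin n) :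
    monomialsOf (restrict f i false) = (monomialsOf f).filter (fun M => i ∉ M) := by
  ext M
  simp only [Finset.mem_filter, mem_monomialsOf]
  by_cases hiM : i ∈ M
  · have := cnt_even_of_indep (restrict_indep f i false) hiM
    constructor
    · intro h; omega
    · rintro ⟨-, h⟩; exact absurd hiM h
  · have hcnt : cnt (restrict f i false) M = cnt f M := by
      unfold cnt
      congr 1
      apply Finset.filter_congr
      intro x _
      show _ ↔ _
      constructor
      · rintro ⟨h1, h2⟩
        refine ⟨h1, ?_⟩
        have hxi : x i = false := by
          cases h : x i
          · rfl
          · exact absurd (h1 i h) hiM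
        rwa [restrict, ← hxi, Function.update_eq_self] at h2
      · rintro ⟨h1, h2⟩
        refine ⟨h1, ?_⟩
        have hxi : x i = false := by
          cases h : x i
          · rfl
          · exact absurd (h1 i h) hiM
        rwa [restrict, ← hxi, Function.update_eq_self]
    rw [hcnt]
    tauto

private lemma psize_const {f : (Fin n → Bool) → Bool} {b : Bool} (h : ∀ x, f x = b) :
    psize f = 0 := by
  rw [psize, Finset.card_eq_zero, Finset.eq_empty_iff_forall_notMem]
  intro M hM
  rw [Finset.mem_filter, mem_monomialsOf] at hM
  obtain ⟨hM1, i, hiM⟩ := hM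
  have : cnt f M % 2 = 0 := by
    apply cnt_even_of_indep (fun x c => by rw [h, h]) hiM
  omega

private def supp (x : Fin n → Bool) : Finset (Fin n) := Finset.univ.filter (fun i => x i = true)

private lemma mem_supp {x : Fin n → Bool} {i : Fin n} : i ∈ supp x ↔ x i = true := by
  simp [supp]

private lemma supp_inj {x y : Fin n → Bool} (h : supp x = supp y) : x = y := by
  funext i
  have := Finset.ext_iff.1 h i
  rw [mem_supp, mem_supp] at this
  cases hx : x i <;> cases hy : y i <;> simp_all

private lemma cast_cnt_sum (f : (Fin n → Bool) → Bool) (M : Finset (Fin n)) :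
    (cnt f M : ZMod 2)
      = ∑ y : Fin n → Bool,
          if ((∀ i, y i = true → i ∈ M) ∧ f y = true) then (1 : ZMod 2) else 0 := by
  rw [cnt, Finset.card_filter, Nat.cast_sum]
  exact Finset.sum_congr rfl (fun y _ => by split_ifs <;> simp)

private lemma icc_sum (x y : Fin n → Bool) :
    (∑ M : Finset (Fin n),
        if ((∀ i, y i = true → i ∈ M) ∧ (∀ i ∈ M, x i = true)) then (1:ZMod 2) else 0)
      = if y = x then 1 else 0 := by
  classical
  have hpred : ∀ M : Finset (Fin n),
      ((∀ i, y i = true → i ∈ M) ∧ (∀ i ∈ M, x i = true)) ↔ M ∈ Finset.Icc (supp y) (supp x) := by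
    intro M
    rw [Finset.mem_Icc]
    constructor
    · rintro ⟨h1, h2⟩
      exact ⟨fun i hi => h1 i (mem_supp.1 hi), fun i hi => mem_supp.2 (h2 i hi)⟩
    · rintro ⟨h1, h2⟩
      exact ⟨fun i hi => h1 (mem_supp.2 hi), fun i hi => mem_supp.1 (h2 hi)⟩
  have hsum : (∑ M : Finset (Fin n),
      if ((∀ i, y i = true → i ∈ M) ∧ (∀ i ∈ M, x i = true)) then (1:ZMod 2) else 0)
      = ((Finset.Icc (supp y) (supp x)).card : ZMod 2) := by
    have hset : Finset.univ.filter (fun M : Finset (Fin n) =>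
        (∀ i, y i = true → i ∈ M) ∧ (∀ i ∈ M, x i = true)) = Finset.Icc (supp y) (supp x) := by
      ext M
      simp [hpred M]
    rw [← Finset.sum_filter, hset, Finset.sum_const, nsmul_eq_mul, mul_one]
  rw [hsum]
  by_cases hsub : supp y ⊆ supp x
  · rw [Finset.card_Icc_finset hsub]
    by_cases heq : supp y = supp x
    · have hyx : y = x := supp_inj heq
      rw [heq, Nat.sub_self, pow_zero, Nat.cast_one, if_pos hyx]
    · have hyx : y ≠ x := fun h => heq (by rw [h])
      have hlt : (supp y).card < (supp x).card :=
        Finset.card_lt_card (lt_of_le_of_ne hsub heq)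
      rw [if_neg hyx, Nat.cast_pow]
      have h2 : ((2:ℕ) : ZMod 2) = 0 := by decide
      rw [h2, zero_pow (by omega)]
  · have hyx : y ≠ x := fun h => hsub (by rw [h])
    rw [Finset.Icc_eq_empty hsub, Finset.card_empty, Nat.cast_zero, if_neg hyx]

private lemma indicator_sum (f : (Fin n → Bool) → Bool) (x : Fin n → Bool) :
    (if f x = true then (1 : ZMod 2) else 0)
      = ∑ M ∈ Finset.univ.filter (fun M : Finset (Fin n) => ∀ i ∈ M, x i = true),
          (cnt f M : ZMod 2) := by
  classical
  rw [Finset.sum_filter]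
  have step1 : ∀ M : Finset (Fin n),
      (if (∀ i ∈ M, x i = true) then (cnt f M : ZMod 2) else 0)
        = ∑ y : Fin n → Bool,
            if (f y = true ∧ ((∀ i, y i = true → i ∈ M) ∧ (∀ i ∈ M, x i = true)))
              then (1 : ZMod 2) else 0 := by
    intro M
    by_cases h : ∀ i ∈ M, x i = true
    · rw [if_pos h, cast_cnt_sum]
      exact Finset.sum_congr rfl (fun y _ => by split_ifs <;> tauto)
    · rw [if_neg h, eq_comm]
      apply Finset.sum_eq_zero
      intro y _
      rw [if_neg]
      tauto
  rw [Finset.sum_congr rfl (fun M _ => step1 M), Finset.sum_comm]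
  have step2 : ∀ y : Fin n → Bool,
      (∑ M : Finset (Fin n),
        if (f y = true ∧ ((∀ i, y i = true → i ∈ M) ∧ (∀ i ∈ M, x i = true)))
          then (1 : ZMod 2) else 0)
        = if y = x then (if f y = true then (1:ZMod 2) else 0) else 0 := by
    intro y
    by_cases hf : f y = true
    · simp only [hf, true_and]
      rw [icc_sum x y]
      split_ifs <;> rfl
    · rw [Finset.sum_eq_zero (fun M _ => if_neg (by tauto)), eq_comm]
      split_ifs <;> simp_all
  rw [Finset.sum_congr rfl (fun y _ => step2 y), Finset.sum_ite_eq' Finset.univ x]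
  simp

private lemma cast_cnt_eq_zero {c : ℕ} (h : c % 2 = 0) : (c : ZMod 2) = 0 := by
  rw [← ZMod.natCast_mod, h, Nat.cast_zero]

private lemma exists_nonempty_monomial (f : (Fin n → Bool) → Bool)
    (hnc : ¬ ∃ b : Bool, ∀ x, f x = b) :
    ∃ M ∈ monomialsOf f, M.Nonempty := by
  classical
  by_contra h
  push_neg at h
  apply hnc
  have key : ∀ x : Fin n → Bool,
      (if f x = true then (1 : ZMod 2) else 0) = (cnt f ∅ : ZMod 2) := by
    intro x
    rw [indicator_sum f x]
    apply Finset.sum_eq_single_of_mem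
    · simp
    · intro M hM hMne
      apply cast_cnt_eq_zero
      have hcases : M ∉ monomialsOf f ∨ ¬ M.Nonempty := by
        by_cases hm : M ∈ monomialsOf f
        · exact Or.inr (Finset.not_nonempty_iff_eq_empty.2 (h M hm))
        · exact Or.inl hm
      rcases hcases with hm | hm
      · rw [mem_monomialsOf] at hm; omega
      · exact absurd (Finset.nonempty_iff_ne_empty.2 hMne) hm
  refine ⟨f (fun _ => false), fun x => ?_⟩
  have h1 := key x
  have h2 := key (fun _ => false)
  rw [← h2] at h1
  cases hx : f x <;> cases hy : f (fun _ => false) <;> rw [hx, hy] at h1 <;> simp_all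

private lemma psize_pos (f : (Fin n → Bool) → Bool)
    (hnc : ¬ ∃ b : Bool, ∀ x, f x = b) : 1 ≤ psize f := by
  obtain ⟨M, hM, hMne⟩ := exists_nonempty_monomial f hnc
  exact Finset.card_pos.2 ⟨M, Finset.mem_filter.2 ⟨hM, hMne⟩⟩

/-! ### Restriction to `true` does not increase psize -/

private lemma cnt_union_eq (f : (Fin n → Bool) → Bool) (i : Fin n) {M : Finset (Fin n)}
    (hiM : i ∉ M) :
    cnt f (M ∪ {i}) = cnt (restrict f i true) M + cnt f M := by
  classical
  have hsplit := Finset.card_filter_add_card_filter_not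
    (s := Finset.univ.filter (fun x : Fin n → Bool =>
      (∀ j, x j = true → j ∈ M ∪ {i}) ∧ f x = true)) (fun x => x i = true)
  have claim1 : ((Finset.univ.filter (fun x : Fin n → Bool =>
      (∀ j, x j = true → j ∈ M ∪ {i}) ∧ f x = true)).filter (fun x => x i = true)).card
      = cnt (restrict f i true) M := by
    apply Finset.card_nbij' (fun x => Function.update x i false)
      (fun y => Function.update y i true)
    · intro x hx
      simp only [Finset.mem_coe, Finset.mem_filter, Finset.mem_univ, true_and] at hx ⊢
      obtain ⟨⟨h1, h2⟩, h3⟩ := hx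
      constructor
      · intro j hj
        rcases eq_or_ne j i with rfl | hne
        · rw [Function.update_self] at hj; exact absurd hj (by simp)
        · rw [Function.update_of_ne hne] at hj
          rcases Finset.mem_union.1 (h1 j hj) with h | h
          · exact h
          · exact absurd (Finset.mem_singleton.1 h) hne
      · show f (Function.update (Function.update x i false) i true) = true
        rw [Function.update_idem, update_self_of_eq h3]
        exact h2
    · intro y hy
      simp only [Finset.mem_coe, Finset.mem_filter, Finset.mem_univ, true_and] at hy ⊢
      obtain ⟨h1, h2⟩ := hy
      refine ⟨⟨?_, h2⟩, Function.update_self i true y⟩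
      intro j hj
      rcases eq_or_ne j i with rfl | hne
      · exact Finset.mem_union_right _ (Finset.mem_singleton_self j)
      · rw [Function.update_of_ne hne] at hj
        exact Finset.mem_union_left _ (h1 j hj)
    · intro x hx
      simp only [Finset.mem_coe, Finset.mem_filter] at hx
      dsimp only; rw [Function.update_idem, ← hx.2, Function.update_eq_self]
    · intro y hy
      simp only [Finset.mem_coe, Finset.mem_filter, Finset.mem_univ, true_and] at hy
      have hyi : y i = false := by
        cases h : y i
        · rfl
        · exact absurd (hy.1 i h) hiM
      dsimp only; rw [Function.update_idem, update_self_of_eq hyi]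
  have claim2 : ((Finset.univ.filter (fun x : Fin n → Bool =>
      (∀ j, x j = true → j ∈ M ∪ {i}) ∧ f x = true)).filter (fun x => ¬ x i = true)).card
      = cnt f M := by
    rw [Finset.filter_filter]
    unfold cnt
    congr 1
    apply Finset.filter_congr
    intro x _
    show _ ↔ _
    constructor
    · rintro ⟨⟨h1, h2⟩, h3⟩
      refine ⟨?_, h2⟩
      intro j hj
      rcases Finset.mem_union.1 (h1 j hj) with h | h
      · exact h
      · exact absurd (Finset.mem_singleton.1 h ▸ hj) h3
    · rintro ⟨h1, h2⟩
      have hxi : x i = false := by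
        cases h : x i
        · rfl
        · exact absurd (h1 i h) hiM
      exact ⟨⟨fun j hj => Finset.mem_union_left _ (h1 j hj), h2⟩, by simp [hxi]⟩
  rw [claim1, claim2] at hsplit
  exact hsplit.symm

private lemma psize_restrict_true_le (f : (Fin n → Bool) → Bool) (i : Fin n) :
    psize (restrict f i true) ≤ psize f := by
  classical
  rw [psize, psize]
  apply Finset.card_le_card_of_injOn
    (fun M => if M ∈ monomialsOf f then M else M ∪ {i})
  · intro M hM
    rw [Finset.mem_coe, Finset.mem_filter] at hM
    obtain ⟨hm, hne⟩ := hM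
    have hiM : i ∉ M := by
      intro hiM
      have := cnt_even_of_indep (restrict_indep f i true) hiM
      rw [mem_monomialsOf] at hm
      omega
    by_cases hmem : M ∈ monomialsOf f
    · simp only [Finset.mem_coe, if_pos hmem]
      exact Finset.mem_filter.2 ⟨hmem, hne⟩
    · simp only [Finset.mem_coe, if_neg hmem]
      obtain ⟨a, ha⟩ := hne
      refine Finset.mem_filter.2 ⟨?_, ⟨a, Finset.mem_union_left _ ha⟩⟩
      rw [mem_monomialsOf] at hm hmem ⊢
      rw [cnt_union_eq f i hiM]
      omega
  · intro M1 hM1 M2 hM2 heq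
    simp only [Finset.coe_filter, Set.mem_setOf_eq] at hM1 hM2
    have hi1 : i ∉ M1 := by
      intro hiM
      have := cnt_even_of_indep (restrict_indep f i true) hiM
      have hm := mem_monomialsOf.1 hM1.1
      omega
    have hi2 : i ∉ M2 := by
      intro hiM
      have := cnt_even_of_indep (restrict_indep f i true) hiM
      have hm := mem_monomialsOf.1 hM2.1
      omega
    simp only at heq
    by_cases hm1 : M1 ∈ monomialsOf f <;> by_cases hm2 : M2 ∈ monomialsOf f
    · rwa [if_pos hm1, if_pos hm2] at heq
    · rw [if_pos hm1, if_neg hm2] at heq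
      exact absurd (by rw [heq]; exact Finset.mem_union_right _ (Finset.mem_singleton_self i)) hi1
    · rw [if_neg hm1, if_pos hm2] at heq
      exact absurd (by rw [← heq]; exact Finset.mem_union_right _ (Finset.mem_singleton_self i)) hi2
    · rw [if_neg hm1, if_neg hm2] at heq
      ext j
      rcases eq_or_ne j i with rfl | hne
      · simp [hi1, hi2]
      · have := Finset.ext_iff.1 heq j
        simp only [Finset.mem_union, Finset.mem_singleton] at this
        constructor
        · intro hj
          rcases this.1 (Or.inl hj) with h | h
          · exact h
          · exact absurd h hne
        · intro hj
          rcases this.2 (Or.inl hj) with h | h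
          · exact h
          · exact absurd h hne

/-! ### psize bookkeeping for restriction to `false` -/

private def kcount (f : (Fin n → Bool) → Bool) (i : Fin n) : ℕ :=
  ((monomialsOf f).filter (fun M => M.Nonempty ∧ i ∈ M)).card

private lemma psize_split (f : (Fin n → Bool) → Bool) (i : Fin n) :
    psize (restrict f i false) + kcount f i = psize f := by
  classical
  rw [psize, psize, kcount, monomialsOf_restrict_false, Finset.filter_filter]
  have hsplit := Finset.card_filter_add_card_filter_not
    (s := (monomialsOf f).filter (fun M => M.Nonempty)) (fun M : Finset (Fin n) => i ∈ M)
  rw [Finset.filter_filter, Finset.filter_filter] at hsplit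
  have hswap : (monomialsOf f).filter (fun M => i ∉ M ∧ M.Nonempty)
      = (monomialsOf f).filter (fun M => M.Nonempty ∧ ¬ i ∈ M) := by
    apply Finset.filter_congr
    intro M _
    show _ ↔ _
    tauto
  rw [hswap]
  rw [add_comm]
  exact hsplit

private lemma kcount_restrict_false_le (f : (Fin n → Bool) → Bool) (i j : Fin n) :
    kcount (restrict f i false) j ≤ kcount f j := by
  rw [kcount, kcount, monomialsOf_restrict_false, Finset.filter_filter]
  apply Finset.card_le_card
  exact Finset.monotone_filter_right _ (fun M _ hM => hM.2)

private lemma psize_restrict_false_lt (f : (Fin n → Bool) → Bool) {M : Finset (Fin n)}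
    (hM : M ∈ monomialsOf f) (hMne : M.Nonempty) {j : Fin n} (hj : j ∈ M) :
    psize (restrict f j false) < psize f := by
  rw [psize, psize, monomialsOf_restrict_false, Finset.filter_filter]
  apply Finset.card_lt_card
  rw [Finset.ssubset_iff_of_subset
    (Finset.monotone_filter_right _ (fun N _ hN => hN.2))]
  exact ⟨M, Finset.mem_filter.2 ⟨hM, hMne⟩, fun hc => (Finset.mem_filter.1 hc).2.1 hj⟩

/-! ### Restricting decision trees -/

private def restrictTree : DTree n → Fin n → Bool → DTree n
  | .leaf b, _, _ => .leaf b
  | .node j t0 t1, i, b =>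
    if j = i then (if b then restrictTree t1 i b else restrictTree t0 i b)
    else .node j (restrictTree t0 i b) (restrictTree t1 i b)

private lemma depth_restrictTree (T : DTree n) (i : Fin n) (b : Bool) :
    (restrictTree T i b).depth ≤ T.depth := by
  induction T with
  | leaf c => exact le_refl _
  | node j t0 t1 ih0 ih1 =>
    rw [restrictTree, depth_node]
    split_ifs with h1 h2
    · refine le_trans ih1 ?_
      have := le_max_right t0.depth t1.depth
      omega
    · refine le_trans ih0 ?_
      have := le_max_left t0.depth t1.depth
      omega
    · rw [depth_node]
      have := max_le_max ih0 ih1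
      omega

private lemma eval_restrictTree (T : DTree n) (i : Fin n) (b : Bool) (x : Fin n → Bool) :
    (restrictTree T i b).eval x = T.eval (Function.update x i b) := by
  induction T with
  | leaf c => rfl
  | node j t0 t1 ih0 ih1 =>
    rw [restrictTree]
    split_ifs with h1 h2
    · subst h1
      rw [ih1, eval_node, Function.update_self, if_pos h2]
    · subst h1
      rw [ih0, eval_node, Function.update_self, if_neg h2]
    · rw [eval_node, eval_node, Function.update_of_ne h1]
      by_cases hx : x j = true
      · rw [if_pos hx, if_pos hx, ih1]
      · rw [if_neg hx, if_neg hx, ih0]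

/-! ### The key lemma -/

private lemma arith_contra (d s s0 k kj : ℕ) (h1 : s0 + k = s) (h2 : (d+1) * k < s)
    (h3 : s0 ≤ d * kj) (hcon : (d+1) * kj < s) : False := by
  have b1 : (d+1) * s0 ≤ (d+1) * (d * kj) := Nat.mul_le_mul_left _ h3
  have b2 : d * ((d+1) * kj) + d ≤ d * s := by
    have hc : (d+1)*kj + 1 ≤ s := hcon
    calc d * ((d+1)*kj) + d = d * ((d+1)*kj + 1) := by ring
      _ ≤ d * s := Nat.mul_le_mul_left d hc
  have b3 : (d+1) * (d * kj) = d * ((d+1) * kj) := by ring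
  have c1 : (d+1)*s0 + d ≤ d*s :=
    le_trans (Nat.add_le_add_right (b1.trans (le_of_eq b3)) d) b2
  have b4 : (d+1) * k + 1 ≤ s := h2
  have b7 : (d+1)*s0 + ((d+1)*k + (d+1)) ≤ d*s + s := by
    calc (d+1)*s0 + ((d+1)*k + (d+1)) = ((d+1)*s0 + d) + ((d+1)*k + 1) := by ring
      _ ≤ d*s + s := Nat.add_le_add c1 b4
  have b8 : d*s + s = ((d+1)*s0 + (d+1)*k) := by rw [← Nat.mul_add, h1]; ring
  rw [b8, ← add_assoc] at b7
  have b9 : ((d+1)*s0 + (d+1)*k) + (d+1) ≤ ((d+1)*s0 + (d+1)*k) + 0 := by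
    calc ((d+1)*s0 + (d+1)*k) + (d+1) = (d+1)*s0 + (d+1)*k + (d+1) := by ring
      _ ≤ (d+1)*s0 + (d+1)*k := b7
      _ = ((d+1)*s0 + (d+1)*k) + 0 := by ring
  have := Nat.le_of_add_le_add_left b9
  omega

private lemma key_lemma (d : ℕ) : ∀ (f : (Fin n → Bool) → Bool) (T : DTree n),
    (∀ x, T.eval x = f x) → T.depth ≤ d →
    psize f = 0 ∨ ∃ j, psize f ≤ d * kcount f j := by
  induction d with
  | zero =>
    intro f T hT hdep
    cases T with
    | leaf b => exact Or.inl (psize_const (fun x => (hT x).symm))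
    | node i t0 t1 =>
      rw [depth_node] at hdep
      omega
  | succ d ih =>
    intro f T hT hdep
    cases T with
    | leaf b => exact Or.inl (psize_const (fun x => (hT x).symm))
    | node i t0 t1 =>
      have hdep0 : (restrictTree t0 i false).depth ≤ d := by
        rw [depth_node] at hdep
        have := depth_restrictTree t0 i false
        omega
      have hf0 : ∀ x, (restrictTree t0 i false).eval x = restrict f i false x := by
        intro x
        rw [eval_restrictTree]
        have := hT (Function.update x i false)
        rw [eval_node, Function.update_self] at this
        simpa [restrict] using this
      by_cases hcase : psize f ≤ (d+1) * kcount f i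
      · exact Or.inr ⟨i, hcase⟩
      · push_neg at hcase
        by_cases hs : psize f = 0
        · exact Or.inl hs
        right
        have hsplit := psize_split f i
        rcases ih (restrict f i false) _ hf0 hdep0 with h0 | ⟨j, hj⟩
        · exfalso
          rw [h0, zero_add] at hsplit
          rw [hsplit] at hcase
          have : psize f ≤ (d+1) * psize f :=
            Nat.le_mul_of_pos_left _ (Nat.succ_pos d)
          omega
        · refine ⟨j, ?_⟩
          by_contra hcon
          push_neg at hcon
          have hk2 : kcount (restrict f i false) j ≤ kcount f j :=
            kcount_restrict_false_le f i j
          have h3 : psize (restrict f i false) ≤ d * kcount f j :=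
            le_trans hj (Nat.mul_le_mul_left d hk2)
          exact arith_contra d (psize f) (psize (restrict f i false)) (kcount f i)
            (kcount f j) hsplit hcase h3 hcon

/-! ### Existence of the greedy tree -/

open Classical in
private noncomputable def Dep (f : (Fin n → Bool) → Bool) : Finset (Fin n) :=
  Finset.univ.filter (fun i => restrict f i false ≠ f)

private lemma mem_Dep {f : (Fin n → Bool) → Bool} {i : Fin n} :
    i ∈ Dep f ↔ restrict f i false ≠ f := by
  simp [Dep]

private lemma dep_restrict_subset (f : (Fin n → Bool) → Bool) (i : Fin n) (b : Bool) :
    Dep (restrict f i b) ⊆ (Dep f).erase i := by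
  intro j hj
  rw [mem_Dep] at hj
  rw [Finset.mem_erase, mem_Dep]
  have hji : j ≠ i := by
    rintro rfl
    apply hj
    funext x
    show restrict f j b (Function.update x j false) = restrict f j b x
    simp [restrict, Function.update_idem]
  refine ⟨hji, ?_⟩
  intro hEq
  apply hj
  funext x
  calc restrict f i b (Function.update x j false)
      = f (Function.update (Function.update x j false) i b) := rfl
    _ = f (Function.update (Function.update x i b) j false) := by
        rw [Function.update_comm hji]
    _ = restrict f j false (Function.update x i b) := rfl
    _ = f (Function.update x i b) := by rw [hEq]
    _ = restrict f i b x := rfl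

private lemma exists_psizeTree (f : (Fin n → Bool) → Bool) : ∃ Tf, PsizeTree f Tf := by
  classical
  suffices h : ∀ k (g : (Fin n → Bool) → Bool), (Dep g).card < k → ∃ Tf, PsizeTree g Tf by
    exact h ((Dep f).card + 1) f (Nat.lt_succ_self _)
  intro k
  induction k with
  | zero => intro g h; omega
  | succ k ih =>
    intro g hk
    by_cases hc : ∃ b, ∀ x, g x = b
    · obtain ⟨b, hb⟩ := hc
      exact ⟨_, PsizeTree.leaf g b hb⟩
    · obtain ⟨M, hM, hMne⟩ := exists_nonempty_monomial g hc
      obtain ⟨j0, hj0⟩ := hMne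
      have hMne' : M.Nonempty := ⟨j0, hj0⟩
      have hnn : (Finset.univ.image (fun j : Fin n => psize (restrict g j false))).Nonempty :=
        Finset.Nonempty.image ⟨j0, Finset.mem_univ j0⟩ _
      set m := Finset.min' _ hnn with hm_def
      have hSne : (Finset.univ.filter
          (fun j : Fin n => psize (restrict g j false) = m)).Nonempty := by
        obtain ⟨a, _, ha⟩ := Finset.mem_image.1 (Finset.min'_mem _ hnn)
        exact ⟨a, Finset.mem_filter.2 ⟨Finset.mem_univ a, ha⟩⟩
      set i := Finset.min' _ hSne with hi_def
      have hi_mem := Finset.min'_mem _ hSne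
      have hi_val : psize (restrict g i false) = m := (Finset.mem_filter.1 hi_mem).2
      have hmin : ∀ j, psize (restrict g i false) ≤ psize (restrict g j false) := by
        intro j
        rw [hi_val]
        exact Finset.min'_le _ _ (Finset.mem_image_of_mem _ (Finset.mem_univ j))
      have hleast : ∀ j, j < i → psize (restrict g i false) < psize (restrict g j false) := by
        intro j hji
        have hne : psize (restrict g j false) ≠ m := by
          intro he
          exact absurd (Finset.min'_le _ j
            (Finset.mem_filter.2 ⟨Finset.mem_univ j, he⟩)) (not_le.2 hji)
        have hge : m ≤ psize (restrict g j false) :=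
          Finset.min'_le _ _ (Finset.mem_image_of_mem _ (Finset.mem_univ j))
        rw [hi_val]
        exact lt_of_le_of_ne hge (Ne.symm hne)
      have hstrict : psize (restrict g i false) < psize g :=
        lt_of_le_of_lt (hmin j0) (psize_restrict_false_lt g hM hMne' hj0)
      have hiDep : i ∈ Dep g :=
        mem_Dep.2 (fun h => by rw [h] at hstrict; exact lt_irrefl _ hstrict)
      have hcard : ∀ b, (Dep (restrict g i b)).card < k := by
        intro b
        have hle : (Dep (restrict g i b)).card ≤ ((Dep g).erase i).card :=
          Finset.card_le_card (dep_restrict_subset g i b)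
        have hlt : ((Dep g).erase i).card < (Dep g).card :=
          Finset.card_erase_lt_of_mem hiDep
        omega
      obtain ⟨t0, ht0⟩ := ih (restrict g i false) (hcard false)
      obtain ⟨t1, ht1⟩ := ih (restrict g i true) (hcard true)
      exact ⟨_, PsizeTree.node g hc i hmin hleast t0 t1 ht0 ht1⟩

/-! ### The main numeric bound -/

private lemma arith_drop (d s s0j kj : ℕ) (hsplit : s0j + kj = s) (hk : s ≤ d * kj) :
    d * s0j ≤ (d - 1) * s := by
  have h1 : d * s0j + s ≤ d * s := by
    calc d * s0j + s ≤ d * s0j + d * kj := Nat.add_le_add_left hk _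
      _ = d * s := by rw [← Nat.mul_add, hsplit]
  have h2 : (d - 1) * s = d * s - s := by
    rw [Nat.sub_mul, one_mul]
  rw [h2]
  exact Nat.le_sub_of_add_le h1

private lemma main_bound (d : ℕ) {f : (Fin n → Bool) → Bool} {Tf : DTree n}
    (hPT : PsizeTree f Tf) :
    (∃ T : DTree n, (∀ x, T.eval x = f x) ∧ T.depth ≤ d) →
    (Tf.zeroDepth = 0 ∨
      d ^ Tf.zeroDepth ≤ d * (d - 1) ^ (Tf.zeroDepth - 1) * psize f) := by
  induction hPT with
  | leaf g b hconst => exact fun _ => Or.inl rfl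
  | node g hnc i hmin hleast t0 t1 h0 h1 ih0 ih1 =>
    intro hex
    right
    obtain ⟨T, hT, hdep⟩ := hex
    have hex0 : ∃ T' : DTree n, (∀ x, T'.eval x = restrict g i false x) ∧ T'.depth ≤ d :=
      ⟨restrictTree T i false,
        fun x => by rw [eval_restrictTree, hT]; rfl,
        le_trans (depth_restrictTree T i false) hdep⟩
    have hex1 : ∃ T' : DTree n, (∀ x, T'.eval x = restrict g i true x) ∧ T'.depth ≤ d :=
      ⟨restrictTree T i true,
        fun x => by rw [eval_restrictTree, hT]; rfl,
        le_trans (depth_restrictTree T i true) hdep⟩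
    have hs1 : 1 ≤ psize g := psize_pos g hnc
    -- greedy drop at the root
    have hdrop : d * psize (restrict g i false) ≤ (d - 1) * psize g := by
      rcases key_lemma d g T hT hdep with h | ⟨j, hj⟩
      · omega
      · have := arith_drop d (psize g) (psize (restrict g j false)) (kcount g j)
          (psize_split g j) hj
        calc d * psize (restrict g i false) ≤ d * psize (restrict g j false) :=
              Nat.mul_le_mul_left d (hmin j)
          _ ≤ (d - 1) * psize g := this
    show d ^ max (t0.zeroDepth + 1) t1.zeroDepth
      ≤ d * (d - 1) ^ (max (t0.zeroDepth + 1) t1.zeroDepth - 1) * psize g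
    rcases le_total (t0.zeroDepth + 1) t1.zeroDepth with hle | hge
    · rw [max_eq_right hle]
      rcases ih1 hex1 with hz | hb
      · omega
      · calc d ^ t1.zeroDepth
            ≤ d * (d-1) ^ (t1.zeroDepth - 1) * psize (restrict g i true) := hb
          _ ≤ d * (d-1) ^ (t1.zeroDepth - 1) * psize g :=
              Nat.mul_le_mul_left _ (psize_restrict_true_le g i)
    · rw [max_eq_left hge]
      have hstep : (t0.zeroDepth + 1) - 1 = t0.zeroDepth := rfl
      rw [hstep]
      rcases Nat.eq_zero_or_pos t0.zeroDepth with hz0 | hpos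
      · rw [hz0]
        simp only [zero_add, pow_one, pow_zero, mul_one]
        exact Nat.le_mul_of_pos_right d hs1
      · rcases ih0 hex0 with hz | hb
        · omega
        · calc d ^ (t0.zeroDepth + 1) = d * d ^ t0.zeroDepth := by ring
            _ ≤ d * (d * (d-1) ^ (t0.zeroDepth - 1) * psize (restrict g i false)) :=
                Nat.mul_le_mul_left d hb
            _ = d * (d-1) ^ (t0.zeroDepth - 1) * (d * psize (restrict g i false)) := by ring
            _ ≤ d * (d-1) ^ (t0.zeroDepth - 1) * ((d-1) * psize g) :=
                Nat.mul_le_mul_left _ hdrop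
            _ = d * ((d-1) ^ (t0.zeroDepth - 1) * (d-1)) * psize g := by ring
            _ = d * (d-1) ^ (t0.zeroDepth - 1 + 1) * psize g := by rw [pow_succ]
            _ = d * (d-1) ^ t0.zeroDepth * psize g := by rw [Nat.sub_add_cancel hpos]

end Stmt18Aux

/-- For a non-constant `f` computable by a decision tree of depth at most
`d ≥ 1` with `s = psize f`, the recursively built tree `T_f` exists and its
zero-depth is at most `d · ln s + 1`. -/
theorem stmt18 {n d : ℕ} (hd : 1 ≤ d) (f : (Fin n → Bool) → Bool)
    (hnc : ¬ ∃ b : Bool, ∀ x, f x = b)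
    (T : DTree n) (hT : ∀ x, T.eval x = f x) (hdepth : T.depth ≤ d) :
    (∃ Tf : DTree n, PsizeTree f Tf) ∧
    ∀ Tf : DTree n, PsizeTree f Tf →
      (Tf.zeroDepth : ℝ) ≤ (d : ℝ) * Real.log (psize f) + 1 := by
  constructor
  · exact exists_psizeTree f
  · intro Tf hPT
    have hs1 : 1 ≤ psize f := psize_pos f hnc
    have hS1 : (1:ℝ) ≤ (psize f : ℝ) := by exact_mod_cast hs1
    have hS0 : (0:ℝ) < (psize f : ℝ) := lt_of_lt_of_le one_pos hS1
    have hlog : 0 ≤ Real.log (psize f) := Real.log_nonneg hS1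
    have hD1 : (1:ℝ) ≤ (d:ℝ) := by exact_mod_cast hd
    have hD0 : (0:ℝ) < (d:ℝ) := lt_of_lt_of_le one_pos hD1
    rcases main_bound d hPT ⟨T, hT, hdepth⟩ with hz | hb
    · rw [hz]
      push_cast
      nlinarith [mul_nonneg (le_of_lt hD0) hlog]
    · rcases Nat.eq_zero_or_pos Tf.zeroDepth with hz0 | hpos
      · rw [hz0]
        push_cast
        nlinarith [mul_nonneg (le_of_lt hD0) hlog]
      · obtain ⟨m, hm⟩ : ∃ m, Tf.zeroDepth = m + 1 :=
          ⟨Tf.zeroDepth - 1, by omega⟩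
        rw [hm] at hb
        simp only [Nat.add_sub_cancel] at hb
        -- cast to ℝ
        have hb' : (d:ℝ) ^ (m+1) ≤ (d:ℝ) * ((d:ℝ) - 1) ^ m * (psize f : ℝ) := by
          have := (Nat.cast_le (α := ℝ)).2 hb
          push_cast at this
          rwa [Nat.cast_sub hd, Nat.cast_one] at this
        set D := (d:ℝ) with hD_def
        set S := (psize f : ℝ) with hS_def
        have step1 : D ^ m ≤ (D - 1) ^ m * S := by
          have h' : D * D ^ m ≤ D * ((D-1)^m * S) := by
            calc D * D ^ m = D ^ (m+1) := by ring
              _ ≤ D * (D-1)^m * S := hb'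
              _ = D * ((D-1)^m * S) := by ring
          exact le_of_mul_le_mul_left h' hD0
        have step2 : D - 1 ≤ D * Real.exp (-(1/D)) := by
          have h' := Real.add_one_le_exp (-(1/D))
          have h'' : D * (-(1/D) + 1) ≤ D * Real.exp (-(1/D)) :=
            mul_le_mul_of_nonneg_left h' (le_of_lt hD0)
          have h3 : D * (-(1/D) + 1) = D - 1 := by
            field_simp
            ring
          linarith [h'']
        have step3 : (D - 1) ^ m ≤ (D * Real.exp (-(1/D))) ^ m :=
          pow_le_pow_left₀ (by linarith) step2 m
        have step4 : (D * Real.exp (-(1/D))) ^ m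
            = D ^ m * Real.exp ((m:ℝ) * (-(1/D))) := by
          rw [mul_pow, ← Real.exp_nat_mul]
        have step5 : D ^ m ≤ D ^ m * Real.exp ((m:ℝ) * (-(1/D))) * S := by
          calc D ^ m ≤ (D-1)^m * S := step1
            _ ≤ (D * Real.exp (-(1/D)))^m * S := by
                apply mul_le_mul_of_nonneg_right step3 (le_of_lt hS0)
            _ = D ^ m * Real.exp ((m:ℝ) * (-(1/D))) * S := by rw [step4]
        have hDm : (0:ℝ) < D ^ m := pow_pos hD0 m
        have step6 : 1 ≤ Real.exp ((m:ℝ) * (-(1/D))) * S := by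
          have h' : D ^ m * 1 ≤ D ^ m * (Real.exp ((m:ℝ) * (-(1/D))) * S) := by
            rw [mul_one]
            calc D ^ m ≤ D ^ m * Real.exp ((m:ℝ) * (-(1/D))) * S := step5
              _ = D ^ m * (Real.exp ((m:ℝ) * (-(1/D))) * S) := by ring
          exact le_of_mul_le_mul_left h' hDm
        have step7 : Real.exp ((m:ℝ) * (1/D)) ≤ S := by
          have hpos' : (0:ℝ) < Real.exp ((m:ℝ) * (-(1/D))) := Real.exp_pos _
          have h' : Real.exp ((m:ℝ) * (1/D)) * 1
              ≤ Real.exp ((m:ℝ) * (1/D)) * (Real.exp ((m:ℝ) * (-(1/D))) * S) :=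
            mul_le_mul_of_nonneg_left step6 (le_of_lt (Real.exp_pos _))
          rw [mul_one] at h'
          calc Real.exp ((m:ℝ) * (1/D))
              ≤ Real.exp ((m:ℝ) * (1/D)) * (Real.exp ((m:ℝ) * (-(1/D))) * S) := h'
            _ = (Real.exp ((m:ℝ) * (1/D)) * Real.exp ((m:ℝ) * (-(1/D)))) * S := by ring
            _ = Real.exp ((m:ℝ) * (1/D) + (m:ℝ) * (-(1/D))) * S := by
                rw [Real.exp_add]
            _ = S := by
                have : (m:ℝ) * (1/D) + (m:ℝ) * (-(1/D)) = 0 := by ring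
                rw [this, Real.exp_zero, one_mul]
        have step8 : (m:ℝ) * (1/D) ≤ Real.log S :=
          (Real.le_log_iff_exp_le hS0).2 step7
        have step9 : (m:ℝ) ≤ D * Real.log S := by
          have h' : (m:ℝ) * (1/D) * D ≤ Real.log S * D :=
            mul_le_mul_of_nonneg_right step8 (le_of_lt hD0)
          have h'' : (m:ℝ) * (1/D) * D = (m:ℝ) := by
            field_simp
          linarith [h']
        rw [hm]
        push_cast
        linarith [step9]
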